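/- For any Boolean function F : {0,1}^n → {0,1} and any k ≥ 1, γ_{1,k}(F) = γ_{1,1}(F): degree-1 polynomials over ℤ/2^kℤ approximate F no better than affine functions over 𝔽₂. -/

import Mathlib

/-- Evaluation of the multilinear polynomial with coefficients `c` at the Boolean point `x`. -/
def evalML {n k : ℕ} (c : Finset (Fin n) → ZMod (2 ^ k)) (x : Fin n → Bool) : ZMod (2 ^ k) :=
  ∑ S : Finset (Fin n), c S * ∏ i ∈ S, (if x i then 1 else 0)

/-- The `k`-lift of a Boolean function: `0 ↦ 0`, `1 ↦ 2^{k-1} ∈ ℤ/2^kℤ`. -/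
def lift {n : ℕ} (k : ℕ) (F : (Fin n → Bool) → Bool) (x : Fin n → Bool) : ZMod (2 ^ k) :=
  if F x then 2 ^ (k - 1) else 0

/-- The number of Boolean points where `P` agrees with the `k`-lift of `F`. -/
def agrCount {n : ℕ} (k : ℕ) (F : (Fin n → Bool) → Bool)
    (c : Finset (Fin n) → ZMod (2 ^ k)) : ℕ :=
  (Finset.univ.filter (fun x : Fin n → Bool => evalML c x = lift k F x)).card

/-- `gamma n d k F` is the maximum, over multilinear polynomials of degree at most `d`
over `ℤ/2^kℤ`, of the number of points of agreement with the `k`-lift of `F`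
(so `γ_{d,k}(F)` equals `gamma n d k F / 2^n`). -/
def gamma (n d k : ℕ) (F : (Fin n → Bool) → Bool) : ℕ :=
  (Finset.univ.filter
      (fun c : Finset (Fin n) → ZMod (2 ^ k) => ∀ S, c S ≠ 0 → S.card ≤ d)).sup
    (agrCount k F)

open Finset

section aux
variable {n k : ℕ}

lemma half_add_half (hk : 1 ≤ k) : (2 ^ (k-1) : ZMod (2^k)) + 2 ^ (k-1) = 0 := by
  have h1 : (2 ^ (k-1) : ZMod (2^k)) + 2 ^ (k-1) = 2 ^ (k-1+1) := by ring
  rw [h1, Nat.sub_add_cancel hk]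
  have := ZMod.natCast_self (2^k)
  push_cast at this
  exact this

lemma half_ne_zero (hk : 1 ≤ k) : (2 ^ (k-1) : ZMod (2^k)) ≠ 0 := by
  have h1 : ((2^(k-1) : ℕ) : ZMod (2^k)) ≠ 0 := by
    rw [Ne, ZMod.natCast_eq_zero_iff]
    intro h
    have h2 := Nat.le_of_dvd (by positivity) h
    have h3 : (2:ℕ)^(k-1) < 2^k := Nat.pow_lt_pow_right (by norm_num) (by omega)
    omega
  push_cast at h1
  exact h1

def jmap (k : ℕ) (a : ZMod 2) : ZMod (2^k) := (a.val : ZMod (2^k)) * 2^(k-1)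

lemma zmod2_cases (a : ZMod 2) : a = 0 ∨ a = 1 := by revert a; decide

lemma jmap_zero : jmap k 0 = 0 := by
  have h : (0 : ZMod 2).val = 0 := rfl
  rw [jmap, h]; simp

lemma jmap_one : jmap k 1 = 2^(k-1) := by
  have h : (1 : ZMod 2).val = 1 := rfl
  rw [jmap, h]; simp

lemma jmap_add (hk : 1 ≤ k) (a b : ZMod 2) : jmap k (a + b) = jmap k a + jmap k b := by
  rcases zmod2_cases a with ha|ha <;> rcases zmod2_cases b with hb|hb <;> subst ha <;> subst hb <;>
    simp [jmap_zero, jmap_one]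
  have h11 : (1 : ZMod 2) + 1 = 0 := by decide
  rw [h11, jmap_zero]
  exact (half_add_half hk).symm

lemma jmap_inj (hk : 1 ≤ k) {a b : ZMod 2} (h : jmap k a = jmap k b) : a = b := by
  rcases zmod2_cases a with ha|ha <;> rcases zmod2_cases b with hb|hb <;> subst ha <;> subst hb <;>
    simp [jmap_zero, jmap_one] at h ⊢ <;>
    first
      | rfl
      | exact absurd h.symm (half_ne_zero hk)
      | exact absurd h (half_ne_zero hk)

lemma prod_ind {R : Type*} [CommRing R] (x : Fin n → Bool) (S : Finset (Fin n)) :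
    (∏ i ∈ S, (if x i then (1:R) else 0)) = if ∀ i ∈ S, x i = true then 1 else 0 := by
  by_cases h : ∀ i ∈ S, x i = true
  · rw [if_pos h, Finset.prod_eq_one]
    intro i hi; simp [h i hi]
  · rw [if_neg h]
    push_neg at h
    obtain ⟨i, hi, hxi⟩ := h
    exact Finset.prod_eq_zero hi (by simp [hxi])

lemma evalML_jmap (hk : 1 ≤ k) (c' : Finset (Fin n) → ZMod (2^1)) (x : Fin n → Bool) :
    evalML (fun S => jmap k (c' S)) x = jmap k (evalML c' x) := by
  unfold evalML
  have hms : jmap k (∑ S : Finset (Fin n), c' S * ∏ i ∈ S, (if x i then 1 else 0)) =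
      ∑ S : Finset (Fin n), jmap k (c' S * ∏ i ∈ S, (if x i then 1 else 0)) :=
    map_sum (AddMonoidHom.mk' (jmap k) (jmap_add hk)) _ _
  rw [hms]
  apply Finset.sum_congr rfl
  intro S _
  show jmap k (c' S) * _ = _
  rw [prod_ind, prod_ind]
  by_cases h : ∀ i ∈ S, x i = true
  · rw [if_pos h, if_pos h, mul_one, mul_one]
  · rw [if_neg h, if_neg h, mul_zero, mul_zero, jmap_zero]

lemma lift_jmap (hk : 1 ≤ k) (F : (Fin n → Bool) → Bool) (x : Fin n → Bool) :
    lift k F x = jmap k (lift 1 F x) := by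
  unfold lift
  cases F x <;> simp [jmap_zero, jmap_one]

lemma agr_jmap (hk : 1 ≤ k) (F : (Fin n → Bool) → Bool) (c' : Finset (Fin n) → ZMod (2^1)) :
    agrCount k F (fun S => jmap k (c' S)) = agrCount 1 F c' := by
  unfold agrCount
  congr 1
  apply Finset.filter_congr
  intro x _
  rw [evalML_jmap hk, lift_jmap hk]
  constructor
  · exact fun h => jmap_inj hk h
  · exact fun h => by rw [h]

def IsHalf (k : ℕ) (a : ZMod (2^k)) : Prop := a = 0 ∨ a = 2^(k-1)

lemma IsHalf.add (hk : 1 ≤ k) {a b : ZMod (2^k)} (ha : IsHalf k a) (hb : IsHalf k b) :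
    IsHalf k (a + b) := by
  rcases ha with ha|ha <;> rcases hb with hb|hb <;> subst ha <;> subst hb <;>
    simp [IsHalf]
  exact Or.inl (half_add_half hk)

lemma IsHalf.neg (hk : 1 ≤ k) {a : ZMod (2^k)} (ha : IsHalf k a) : IsHalf k (-a) := by
  rcases ha with ha|ha <;> subst ha <;> simp [IsHalf]
  right
  rw [neg_eq_iff_add_eq_zero]
  exact half_add_half hk

lemma IsHalf.sub (hk : 1 ≤ k) {a b : ZMod (2^k)} (ha : IsHalf k a) (hb : IsHalf k b) :
    IsHalf k (a - b) := by
  rw [sub_eq_add_neg]; exact ha.add hk (hb.neg hk)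

lemma IsHalf.zero : IsHalf k (0 : ZMod (2^k)) := Or.inl rfl

lemma IsHalf.sum (hk : 1 ≤ k) {ι : Type*} (T : Finset ι) (f : ι → ZMod (2^k))
    (h : ∀ s ∈ T, IsHalf k (f s)) : IsHalf k (∑ s ∈ T, f s) :=
  Finset.sum_induction f (IsHalf k) (fun _ _ ha hb => ha.add hk hb) IsHalf.zero h

lemma isHalf_lift (F : (Fin n → Bool) → Bool) (x : Fin n → Bool) : IsHalf k (lift k F x) := by
  unfold lift; split
  · exact Or.inr rfl
  · exact Or.inl rfl

lemma eval_diff {c : Finset (Fin n) → ZMod (2^k)} (hc : ∀ S, c S ≠ 0 → S.card ≤ 1)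
    (x : Fin n → Bool) (i : Fin n) :
    evalML c x - evalML c (Function.update x i (!x i)) =
      c {i} * ((if x i then 1 else 0) - (if !x i then 1 else 0)) := by
  unfold evalML
  rw [← Finset.sum_sub_distrib, Finset.sum_eq_single {i}]
  · rw [Finset.prod_singleton, Finset.prod_singleton, Function.update_self, ← mul_sub]
  · intro S _ hS
    by_cases hiS : i ∈ S
    · have hss : ({i} : Finset (Fin n)) ⊂ S :=
        Finset.ssubset_iff_subset_ne.mpr ⟨Finset.singleton_subset_iff.mpr hiS, Ne.symm hS⟩
      have hcard : 1 < S.card := by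
        have := Finset.card_lt_card hss
        simpa using this
      have hc0 : c S = 0 := by
        by_contra h
        exact absurd (hc S h) (by omega)
      simp [hc0]
    · have hprod : (∏ j ∈ S, (if Function.update x i (!x i) j then (1 : ZMod (2^k)) else 0)) =
          ∏ j ∈ S, (if x j then 1 else 0) := by
        apply Finset.prod_congr rfl
        intro j hj
        rw [Function.update_of_ne (fun (h : j = i) => hiS (h ▸ hj))]
      rw [hprod, sub_self]
  · intro h; exact absurd (Finset.mem_univ _) h

lemma key_half (hk : 1 ≤ k) {c : Finset (Fin n) → ZMod (2^k)} {F : (Fin n → Bool) → Bool}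
    (hc : ∀ S, c S ≠ 0 → S.card ≤ 1) {x : Fin n → Bool} {i : Fin n}
    (hx : evalML c x = lift k F x)
    (hx' : evalML c (Function.update x i (!x i)) = lift k F (Function.update x i (!x i))) :
    IsHalf k (c {i}) := by
  have hd := eval_diff hc x i
  rw [hx, hx'] at hd
  have hh : IsHalf k (lift k F x - lift k F (Function.update x i (!x i))) :=
    (isHalf_lift F x).sub hk (isHalf_lift F _)
  rw [hd] at hh
  cases hxi : x i
  · simp [hxi] at hh
    have := hh.neg hk
    rwa [neg_neg] at this
  · simpa [hxi] using hh

lemma pair_bound (A : Finset (Fin n → Bool)) (i : Fin n)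
    (h : ∀ x ∈ A, Function.update x i (!x i) ∉ A) : A.card ≤ 2^(n-1) := by
  set σ : (Fin n → Bool) → (Fin n → Bool) := fun x => Function.update x i (!x i) with hσ
  have hinv : ∀ x, σ (σ x) = x := by
    intro x; funext j
    by_cases hj : j = i
    · subst hj; simp [σ]
    · simp [σ, Function.update_of_ne hj]
  have hinj : Function.Injective σ := fun a b hab => by rw [← hinv a, hab, hinv b]
  have hdisj : Disjoint A (A.image σ) := by
    rw [Finset.disjoint_right]
    intro y hy hyA
    obtain ⟨z, hzA, rfl⟩ := Finset.mem_image.mp hy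
    exact h z hzA hyA
  have hcard : A.card + A.card ≤ 2^n := by
    have h1 : (A ∪ A.image σ).card = A.card + (A.image σ).card :=
      Finset.card_union_of_disjoint hdisj
    have h2 : (A ∪ A.image σ).card ≤ Fintype.card (Fin n → Bool) :=
      Finset.card_le_card (Finset.subset_univ _)
    have h3 : Fintype.card (Fin n → Bool) = 2^n := by
      simp [Fintype.card_fun]
    have h4 : (A.image σ).card = A.card := Finset.card_image_of_injective _ hinj
    omega
  have hn : 1 ≤ n := i.pos
  have h2 : (2:ℕ)^n = 2^(n-1) * 2 := by
    rw [← pow_succ, Nat.sub_add_cancel hn]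
  omega

lemma const_half (hk : 1 ≤ k) {c : Finset (Fin n) → ZMod (2^k)} {F : (Fin n → Bool) → Bool}
    (hc : ∀ S, c S ≠ 0 → S.card ≤ 1) (hlin : ∀ i : Fin n, IsHalf k (c {i}))
    {x : Fin n → Bool} (hx : evalML c x = lift k F x) : IsHalf k (c ∅) := by
  have hsplit : evalML c x = c ∅ +
      ∑ S ∈ Finset.univ.erase ∅, c S * ∏ j ∈ S, (if x j then (1 : ZMod (2^k)) else 0) := by
    unfold evalML
    rw [← Finset.add_sum_erase _ _ (Finset.mem_univ ∅)]
    simp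
  have hrest : IsHalf k
      (∑ S ∈ Finset.univ.erase ∅, c S * ∏ j ∈ S, (if x j then (1 : ZMod (2^k)) else 0)) := by
    apply IsHalf.sum hk
    intro S hS
    by_cases h1 : S.card ≤ 1
    · have hne : S ≠ ∅ := (Finset.mem_erase.mp hS).1
      have hcard : S.card = 1 := by
        have : S.card ≠ 0 := fun h => hne (Finset.card_eq_zero.mp h)
        omega
      obtain ⟨i, rfl⟩ := Finset.card_eq_one.mp hcard
      rw [Finset.prod_singleton]
      cases hxi : x i
      · simp [hxi]; exact IsHalf.zero
      · simpa [hxi] using hlin i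
    · have hc0 : c S = 0 := by
        by_contra h; exact h1 (hc S h)
      simp [hc0]; exact IsHalf.zero
  have hconst : c ∅ = evalML c x -
      ∑ S ∈ Finset.univ.erase ∅, c S * ∏ j ∈ S, (if x j then (1 : ZMod (2^k)) else 0) := by
    rw [hsplit]; ring
  rw [hconst, hx]
  exact (isHalf_lift F x).sub hk hrest

lemma all_half_bound (hk : 1 ≤ k) {c : Finset (Fin n) → ZMod (2^k)} {F : (Fin n → Bool) → Bool}
    (hc : ∀ S, c S ≠ 0 → S.card ≤ 1) (hall : ∀ S, IsHalf k (c S)) :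
    agrCount k F c ≤ gamma n 1 1 F := by
  set c' : Finset (Fin n) → ZMod (2^1) := fun S => if c S = 2^(k-1) then 1 else 0 with hc'
  have hcc : c = fun S => jmap k (c' S) := by
    funext S
    rcases hall S with h|h
    · have hne : (0 : ZMod (2^k)) ≠ 2^(k-1) := Ne.symm (half_ne_zero hk)
      simp [c', h, hne, jmap_zero]
    · simp [c', h, jmap_one]
  have hmem : c' ∈ Finset.univ.filter
      (fun c : Finset (Fin n) → ZMod (2^1) => ∀ S, c S ≠ 0 → S.card ≤ 1) := by
    rw [Finset.mem_filter]
    refine ⟨Finset.mem_univ _, fun S hS => ?_⟩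
    have : c S = 2^(k-1) := by
      by_contra h
      simp [c', h] at hS
    exact hc S (by rw [this]; exact half_ne_zero hk)
  calc agrCount k F c = agrCount 1 F c' := by rw [hcc]; exact agr_jmap hk F c'
    _ ≤ gamma n 1 1 F := Finset.le_sup hmem

lemma half_le_gamma (hn : 1 ≤ n) (F : (Fin n → Bool) → Bool) :
    2^(n-1) ≤ gamma n 1 1 F := by
  classical
  set c0 : Finset (Fin n) → ZMod (2^1) := fun _ => 0 with hc0
  set c1 : Finset (Fin n) → ZMod (2^1) := fun S => if S = ∅ then 1 else 0 with hc1
  have h0 : ∀ x, evalML c0 x = 0 := by intro x; simp [evalML, c0]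
  have h1 : ∀ x, evalML c1 x = 1 := by
    intro x
    unfold evalML
    rw [Finset.sum_eq_single ∅]
    · simp [c1]
    · intro S _ hS; simp [c1, hS]
    · intro h; exact absurd (Finset.mem_univ _) h
  have hm0 : c0 ∈ Finset.univ.filter
      (fun c : Finset (Fin n) → ZMod (2^1) => ∀ S, c S ≠ 0 → S.card ≤ 1) := by
    rw [Finset.mem_filter]
    exact ⟨Finset.mem_univ _, fun S hS => absurd rfl hS⟩
  have hm1 : c1 ∈ Finset.univ.filter
      (fun c : Finset (Fin n) → ZMod (2^1) => ∀ S, c S ≠ 0 → S.card ≤ 1) := by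
    rw [Finset.mem_filter]
    refine ⟨Finset.mem_univ _, fun S hS => ?_⟩
    by_cases h : S = ∅
    · subst h; simp
    · simp [c1, h] at hS
  have e0 : agrCount 1 F c0 = (Finset.univ.filter (fun x => F x = false)).card := by
    unfold agrCount
    congr 1
    apply Finset.filter_congr
    intro x _
    rw [h0]
    unfold lift
    cases hFx : F x <;> simp
  have e1 : agrCount 1 F c1 = (Finset.univ.filter (fun x => F x = true)).card := by
    unfold agrCount
    congr 1
    apply Finset.filter_congr
    intro x _
    rw [h1]
    unfold lift
    cases hFx : F x <;> simp
  have hsum : (Finset.univ.filter (fun x => F x = false)).card +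
      (Finset.univ.filter (fun x => F x = true)).card = 2^n := by
    have heq : (Finset.univ.filter (fun x : Fin n → Bool => F x = true)) =
        (Finset.univ.filter (fun x : Fin n → Bool => ¬ (F x = false))) := by
      apply Finset.filter_congr
      intro x _
      cases F x <;> simp
    rw [heq, Finset.card_filter_add_card_filter_not]
    simp [Fintype.card_fun]
  have hg0 : agrCount 1 F c0 ≤ gamma n 1 1 F := Finset.le_sup hm0
  have hg1 : agrCount 1 F c1 ≤ gamma n 1 1 F := Finset.le_sup hm1
  have h2 : (2:ℕ)^n = 2^(n-1) * 2 := by rw [← pow_succ, Nat.sub_add_cancel hn]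
  omega

end aux

/-- Degree-1 polynomials over `ℤ/2^kℤ` approximate `F` no better than affine functions
over `𝔽₂`: `γ_{1,k}(F) = γ_{1,1}(F)`. -/
theorem stmt11 (n k : ℕ) (hk : 1 ≤ k) (F : (Fin n → Bool) → Bool) :
    gamma n 1 k F = gamma n 1 1 F := by
  apply le_antisymm
  · apply Finset.sup_le
    intro c hc
    rw [Finset.mem_filter] at hc
    have hdeg := hc.2
    by_cases hgood : ∀ i : Fin n, IsHalf k (c {i})
    · by_cases hA : (Finset.univ.filter (fun x => evalML c x = lift k F x)).Nonempty
      · obtain ⟨x, hx⟩ := hA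
        rw [Finset.mem_filter] at hx
        have hconst := const_half hk hdeg hgood hx.2
        have hall : ∀ S, IsHalf k (c S) := by
          intro S
          rcases Nat.lt_or_ge S.card 2 with h|h
          · interval_cases hS : S.card
            · rw [Finset.card_eq_zero.mp hS]; exact hconst
            · obtain ⟨i, rfl⟩ := Finset.card_eq_one.mp hS
              exact hgood i
          · left
            by_contra hne
            have := hdeg S hne
            omega
        exact all_half_bound hk hdeg hall
      · unfold agrCount
        rw [Finset.not_nonempty_iff_eq_empty.mp hA]
        simp
    · push_neg at hgood
      obtain ⟨i, hi⟩ := hgood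
      have hb : agrCount k F c ≤ 2^(n-1) := by
        apply pair_bound _ i
        intro x hx hx'
        rw [Finset.mem_filter] at hx hx'
        exact hi (key_half hk hdeg hx.2 hx'.2)
      exact le_trans hb (half_le_gamma i.pos F)
  · apply Finset.sup_le
    intro c' hc'
    rw [Finset.mem_filter] at hc'
    have hmem : (fun S => jmap k (c' S)) ∈ Finset.univ.filter
        (fun c : Finset (Fin n) → ZMod (2^k) => ∀ S, c S ≠ 0 → S.card ≤ 1) := by
      rw [Finset.mem_filter]
      refine ⟨Finset.mem_univ _, fun S hS => ?_⟩
      apply hc'.2 S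
      intro h
      exact hS (by show jmap k (c' S) = 0; rw [h, jmap_zero])
    calc agrCount 1 F c' = agrCount k F (fun S => jmap k (c' S)) := (agr_jmap hk F c').symm
      _ ≤ gamma n 1 k F := Finset.le_sup hmem
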